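/- For any integral lattice L ⊂ ℝ^n and any positive integer k, the set of lattice vectors y ∈ L with ‖y‖² = k is finite and has cardinality at most 2 · binomial(n + 2k − 2, 2k − 1). -/

import Mathlib

open MvPolynomial Finset

noncomputable def sphLin (n : ℕ) (y : Fin n → ℝ) : MvPolynomial (Fin n) ℝ :=
  ∑ i, C (y i) * X i

noncomputable def sphP (n k : ℕ) (y : Fin n → ℝ) : MvPolynomial (Fin n) ℝ :=
  sphLin n y *
    ∏ s ∈ Finset.range (k - 1),
      (C (k : ℝ) * sphLin n y ^ 2 - C (((s : ℝ) + 1) ^ 2) * ∑ i, X i ^ 2)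

lemma sphLin_isHomogeneous (n : ℕ) (y : Fin n → ℝ) : (sphLin n y).IsHomogeneous 1 :=
  IsHomogeneous.sum _ _ _ fun i _ => isHomogeneous_C_mul_X (y i) i

lemma sphP_isHomogeneous (n k : ℕ) (hk : 0 < k) (y : Fin n → ℝ) :
    (sphP n k y).IsHomogeneous (2 * k - 1) := by
  have h1 : (sphLin n y).IsHomogeneous 1 := sphLin_isHomogeneous n y
  have h2 : ∀ s : ℕ,
      (C (k : ℝ) * sphLin n y ^ 2 - C (((s : ℝ) + 1) ^ 2) * ∑ i, X i ^ 2).IsHomogeneous 2 := by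
    intro s
    have ha : (C (k : ℝ) * sphLin n y ^ 2).IsHomogeneous 2 := by
      have := h1.pow 2
      rw [one_mul] at this
      exact this.C_mul _
    have hb : ((C (((s : ℝ) + 1) ^ 2) * ∑ i, X i ^ 2 :
        MvPolynomial (Fin n) ℝ)).IsHomogeneous 2 := by
      have : ((∑ i, X i ^ 2 : MvPolynomial (Fin n) ℝ)).IsHomogeneous 2 :=
        IsHomogeneous.sum _ _ _ fun i _ => isHomogeneous_X_pow i 2
      exact this.C_mul _
    exact ha.sub hb
  have hprod : (∏ s ∈ Finset.range (k - 1),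
      (C (k : ℝ) * sphLin n y ^ 2 - C (((s : ℝ) + 1) ^ 2) * ∑ i, X i ^ 2)).IsHomogeneous
        (∑ s ∈ Finset.range (k - 1), 2) :=
    IsHomogeneous.prod _ _ _ fun s _ => h2 s
  have := h1.mul hprod
  have heq : 1 + ∑ s ∈ Finset.range (k - 1), 2 = 2 * k - 1 := by
    simp [Finset.sum_const]
    omega
  rw [heq] at this
  exact this

lemma sphP_eval (n k : ℕ) (y x : Fin n → ℝ) :
    eval x (sphP n k y) =
      (∑ i, y i * x i) *
        ∏ s ∈ Finset.range (k - 1),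
          ((k : ℝ) * (∑ i, y i * x i) ^ 2 - ((s : ℝ) + 1) ^ 2 * ∑ i, x i ^ 2) := by
  simp [sphP, sphLin, eval_prod]

lemma sphP_eval_eq_zero (n k : ℕ) (y x : Fin n → ℝ) (m : ℤ)
    (ht : ∑ i, y i * x i = (m : ℝ)) (hx : ∑ i, x i ^ 2 = (k : ℝ))
    (hm : m.natAbs ≤ k - 1) (hk : 0 < k) :
    eval x (sphP n k y) = 0 := by
  rw [sphP_eval, ht, hx]
  rcases eq_or_ne m 0 with rfl | hm0
  · simp
  · have h1 : 1 ≤ m.natAbs := Int.natAbs_pos.mpr hm0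
    have ha : m.natAbs - 1 ∈ Finset.range (k - 1) := by
      rw [Finset.mem_range]; omega
    rw [Finset.prod_eq_zero ha, mul_zero]
    have hcast : ((m.natAbs - 1 : ℕ) : ℝ) + 1 = |(m : ℝ)| := by
      rw [Nat.cast_sub h1, Nat.cast_natAbs]
      simp
    rw [hcast]
    have : |(m : ℝ)| ^ 2 = (m : ℝ) ^ 2 := sq_abs _
    rw [this]; ring

lemma sphP_eval_self_ne_zero (n k : ℕ) (hk : 0 < k) (y : Fin n → ℝ)
    (hy : ∑ i, y i ^ 2 = (k : ℝ)) :
    eval y (sphP n k y) ≠ 0 := by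
  have ht : ∑ i, y i * y i = (k : ℝ) := by
    rw [← hy]; exact Finset.sum_congr rfl fun i _ => (sq (y i)).symm
  rw [sphP_eval, ht, hy]
  apply mul_ne_zero
  · exact_mod_cast hk.ne'
  · rw [Finset.prod_ne_zero_iff]
    intro s hs
    rw [Finset.mem_range] at hs
    have hs1 : (s : ℝ) + 1 < (k : ℝ) := by
      have : s + 1 < k := by omega
      exact_mod_cast this
    have hpos : (0:ℝ) < (s:ℝ) + 1 := by positivity
    have hkpos : (0:ℝ) < (k:ℝ) := by exact_mod_cast hk
    intro hzero
    have hfac : (0:ℝ) < (k:ℝ) * (((k:ℝ) - ((s:ℝ)+1)) * ((k:ℝ) + ((s:ℝ)+1))) :=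
      mul_pos hkpos (mul_pos (by linarith) (by linarith))
    nlinarith

noncomputable instance sphSubFintype (n d : ℕ) :
    Fintype {P : Fin n →₀ ℕ // P.sum (fun _ ↦ id) = d} :=
  Fintype.ofEquiv (Sym (Fin n) d) (Sym.equivNatSum (Fin n) d)

noncomputable def sphF (n d : ℕ) : Finset (MvPolynomial (Fin n) ℝ) :=
  (Finset.univ : Finset {P : Fin n →₀ ℕ // P.sum (fun _ ↦ id) = d}).image
    (fun a => monomial a.1 (1 : ℝ))

lemma sphF_card (n d : ℕ) : (sphF n d).card ≤ (n + d - 1).choose d := by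
  refine (Finset.card_image_le).trans ?_
  rw [Finset.card_univ]
  rw [Fintype.card_congr (Sym.equivNatSum (Fin n) d).symm]
  rw [Sym.card_sym_eq_choose]
  simp

lemma sphP_mem_span (n k : ℕ) (hk : 0 < k) (y : Fin n → ℝ) :
    sphP n k y ∈ Submodule.span ℝ (sphF n (2 * k - 1) : Set (MvPolynomial (Fin n) ℝ)) := by
  have hp := sphP_isHomogeneous n k hk y
  rw [← support_sum_monomial_coeff (sphP n k y)]
  apply Submodule.sum_mem
  intro v hv
  have hdeg : v.degree = 2 * k - 1 := by
    by_contra h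
    exact (mem_support_iff.mp hv) (hp.coeff_eq_zero h)
  have hsum : v.sum (fun _ ↦ id) = 2 * k - 1 := hdeg
  have : (monomial v) (coeff v (sphP n k y)) = coeff v (sphP n k y) • monomial v (1 : ℝ) := by
    rw [smul_monomial, smul_eq_mul, mul_one]
  rw [this]
  apply Submodule.smul_mem
  apply Submodule.subset_span
  rw [sphF]
  simp only [Finset.coe_image, Set.mem_image]
  exact ⟨⟨v, hsum⟩, ⟨by simp, rfl⟩⟩

/-- **Reverse Minkowski for integral lattices, sphere version.**
For any integral lattice `L ⊂ ℝ^n` (a discrete additive subgroup all of whose pairwise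
inner products are integers) and any positive integer `k`, the set of lattice vectors of
squared norm exactly `k` is finite, of cardinality at most `2 * (n + 2k - 2).choose (2k - 1)`. -/
theorem integral_lattice_sphere_count (n k : ℕ) (hk : 0 < k)
    (L : AddSubgroup (EuclideanSpace ℝ (Fin n)))
    (hdisc : DiscreteTopology L)
    (hint : ∀ x ∈ L, ∀ y ∈ L, ∃ m : ℤ, (inner ℝ x y : ℝ) = (m : ℝ)) :
    {y : EuclideanSpace ℝ (Fin n) | y ∈ L ∧ ‖y‖ ^ 2 = (k : ℝ)}.Finite ∧
      {y : EuclideanSpace ℝ (Fin n) | y ∈ L ∧ ‖y‖ ^ 2 = (k : ℝ)}.ncard ≤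
        2 * Nat.choose (n + 2 * k - 2) (2 * k - 1) := by
  classical
  set S : Set (EuclideanSpace ℝ (Fin n)) := {y : EuclideanSpace ℝ (Fin n) | y ∈ L ∧ ‖y‖ ^ 2 = (k : ℝ)} with hSdef
  have hinner : ∀ x y : EuclideanSpace ℝ (Fin n), (inner ℝ x y : ℝ) = ∑ i, x i * y i := by
    intro x y
    simp [PiLp.inner_apply, RCLike.inner_apply, mul_comm]
  have hsq : ∀ y : EuclideanSpace ℝ (Fin n), y ∈ S → ∑ i, y i ^ 2 = (k : ℝ) := by
    intro y hy
    have h1 : (inner ℝ y y : ℝ) = ‖y‖ ^ 2 := real_inner_self_eq_norm_sq y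
    rw [hinner] at h1
    calc ∑ i, y i ^ 2 = ∑ i, y i * y i := by simp [sq]
      _ = ‖y‖ ^ 2 := h1
      _ = (k : ℝ) := hy.2
  -- no element of S equals its own negation
  have hne0 : ∀ y : EuclideanSpace ℝ (Fin n), y ∈ S → y ≠ -y := by
    intro y hy h
    have hy0 : y = 0 := by
      have h2 : (2 : ℝ) • y = 0 := by
        rw [two_smul]; nth_rewrite 1 [h]; simp
      rcases smul_eq_zero.mp h2 with h3 | h3
      · norm_num at h3
      · exact h3
    have := hy.2
    rw [hy0] at this
    simp at this
    exact absurd this.symm (by exact_mod_cast hk.ne')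
  set r : EuclideanSpace ℝ (Fin n) → EuclideanSpace ℝ (Fin n) → Prop := WellOrderingRel with hrdef
  have rasymm : ∀ a b : EuclideanSpace ℝ (Fin n), r a b → r b a → False := by
    intro a b h h'
    exact irrefl_of WellOrderingRel a (_root_.trans h h')
  set T : Set (EuclideanSpace ℝ (Fin n)) := {y : EuclideanSpace ℝ (Fin n) | y ∈ S ∧ r (-y) y} with hTdef
  -- key inner product bound
  have key : ∀ y : EuclideanSpace ℝ (Fin n), y ∈ S → ∀ x : EuclideanSpace ℝ (Fin n), x ∈ S → x ≠ y → x ≠ -y →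
      ∃ m : ℤ, (∑ i, y i * x i) = (m : ℝ) ∧ m.natAbs ≤ k - 1 := by
    intro y hy x hx hne hnne
    obtain ⟨m, hm⟩ := hint y hy.1 x hx.1
    refine ⟨m, by rw [← hinner]; exact hm, ?_⟩
    have habs : |(inner ℝ y x : ℝ)| ≤ ‖y‖ * ‖x‖ := abs_real_inner_le_norm y x
    have hprod : (‖y‖ * ‖x‖ - (k : ℝ)) * (‖y‖ * ‖x‖ + (k : ℝ)) = 0 := by
      linear_combination (‖x‖ ^ 2) * hy.2 + (k : ℝ) * hx.2
    have hkpos : (0 : ℝ) < (k : ℝ) := by exact_mod_cast hk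
    have hab : ‖y‖ * ‖x‖ = (k : ℝ) := by
      rcases mul_eq_zero.mp hprod with h | h
      · linarith
      · nlinarith [mul_nonneg (norm_nonneg y) (norm_nonneg x)]
    rw [hm, hab] at habs
    have hmk : |m| ≤ (k : ℤ) := by exact_mod_cast habs
    rw [Int.abs_eq_natAbs] at hmk
    have hm1 : m ≠ (k : ℤ) := by
      intro h
      have hik : (inner ℝ y x : ℝ) = (k : ℝ) := by rw [hm, h]; simp
      have : ‖y - x‖ ^ 2 = 0 := by
        rw [norm_sub_sq_real, hy.2, hx.2, hik]; ring
      have : y - x = 0 := by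
        have := pow_eq_zero_iff (n := 2) (by norm_num) |>.mp this
        exact norm_eq_zero.mp this
      exact hne (by rw [← sub_eq_zero]; rw [← neg_sub y x, this, neg_zero])
    have hm2 : m ≠ -(k : ℤ) := by
      intro h
      have hik : (inner ℝ y x : ℝ) = -(k : ℝ) := by rw [hm, h]; simp
      have : ‖y + x‖ ^ 2 = 0 := by
        rw [norm_add_sq_real, hy.2, hx.2, hik]; ring
      have : y + x = 0 := by
        have := pow_eq_zero_iff (n := 2) (by norm_num) |>.mp this
        exact norm_eq_zero.mp this
      exact hnne (by rw [eq_neg_iff_add_eq_zero, add_comm]; exact this)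
    omega
  -- linear independence of the family indexed by T
  have hli : LinearIndependent ℝ (fun y : T => sphP n k (fun i => (y : EuclideanSpace ℝ (Fin n)) i)) := by
    rw [linearIndependent_iff']
    intro sF c hsum i hi
    have hEv := congrArg (eval (fun j => (i : EuclideanSpace ℝ (Fin n)) j)) hsum
    simp only [map_sum, smul_eval, map_zero] at hEv
    rw [Finset.sum_eq_single i] at hEv
    · have hne := sphP_eval_self_ne_zero n k hk (fun j => (i : EuclideanSpace ℝ (Fin n)) j) (hsq _ i.2.1)
      exact (mul_eq_zero.mp hEv).resolve_right hne
    · intro j hj hji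
      have hxne : (i : EuclideanSpace ℝ (Fin n)) ≠ (j : EuclideanSpace ℝ (Fin n)) := fun h => hji (Subtype.coe_injective h.symm)
      have hxnne : (i : EuclideanSpace ℝ (Fin n)) ≠ -(j : EuclideanSpace ℝ (Fin n)) := by
        intro h
        have h1 := i.2.2
        rw [h, neg_neg] at h1
        exact rasymm _ _ h1 j.2.2
      obtain ⟨m, hm, hmabs⟩ := key (j : EuclideanSpace ℝ (Fin n)) j.2.1 (i : EuclideanSpace ℝ (Fin n)) i.2.1 hxne hxnne
      rw [sphP_eval_eq_zero n k _ _ m hm (hsq _ i.2.1) hmabs hk, mul_zero]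
    · intro h; exact absurd hi h
  -- transfer into the span of monomials
  set M := Submodule.span ℝ ((sphF n (2 * k - 1) : Finset (MvPolynomial (Fin n) ℝ)) :
      Set (MvPolynomial (Fin n) ℝ)) with hMdef
  have hmem : ∀ y : T, sphP n k (fun i => (y : EuclideanSpace ℝ (Fin n)) i) ∈ M := fun y =>
    sphP_mem_span n k hk _
  set v' : T → M := fun y => ⟨sphP n k (fun i => (y : EuclideanSpace ℝ (Fin n)) i), hmem y⟩ with hv'def
  have hli' : LinearIndependent ℝ v' := by
    apply LinearIndependent.of_comp M.subtype
    exact hli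
  haveI : Module.Finite ℝ M := FiniteDimensional.span_finset ℝ _
  have hfinT : Finite T := by
    have := hli'.lt_aleph0_of_finite
    exact Cardinal.mk_lt_aleph0_iff.mp this
  have hTfin : T.Finite := Set.finite_coe_iff.mp hfinT
  haveI : Fintype T := hTfin.fintype
  have hcardT : T.ncard ≤ Nat.choose (n + 2 * k - 2) (2 * k - 1) := by
    have h1 : Fintype.card T ≤ Module.finrank ℝ M := hli'.fintype_card_le_finrank
    have h2 : Module.finrank ℝ M ≤ (sphF n (2 * k - 1)).card :=
      finrank_span_finset_le_card _
    have h3 := sphF_card n (2 * k - 1)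
    have h4 : n + (2 * k - 1) - 1 = n + 2 * k - 2 := by omega
    rw [h4] at h3
    have h5 : T.ncard = Fintype.card T := by
      rw [← Nat.card_coe_set_eq, Nat.card_eq_fintype_card]
    omega
  -- S is covered by T and -T
  have hSsub : S ⊆ T ∪ (Neg.neg '' T) := by
    intro y hy
    have hyS : -y ∈ S := by
      refine ⟨neg_mem hy.1, ?_⟩
      rw [norm_neg]; exact hy.2
    rcases trichotomous_of WellOrderingRel (-y) y with h | h | h
    · exact Or.inl ⟨hy, h⟩
    · exact absurd h.symm (hne0 y hy)
    · refine Or.inr ⟨-y, ⟨hyS, ?_⟩, neg_neg y⟩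
      rw [neg_neg]
      exact h
  have hSfin : S.Finite := (hTfin.union (hTfin.image _)).subset hSsub
  refine ⟨hSfin, ?_⟩
  calc S.ncard ≤ (T ∪ Neg.neg '' T).ncard :=
        Set.ncard_le_ncard hSsub (hTfin.union (hTfin.image _))
    _ ≤ T.ncard + (Neg.neg '' T).ncard := Set.ncard_union_le _ _
    _ ≤ T.ncard + T.ncard := by
        have := Set.ncard_image_le (f := Neg.neg) (s := T) hTfin
        omega
    _ = 2 * T.ncard := by ring
    _ ≤ 2 * Nat.choose (n + 2 * k - 2) (2 * k - 1) := by omega
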